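/- Let f ∈ SV_d(X) and φ ∈ 𝓕(X). Then the function F : X → ℝ defined by F(x) = φ_f(x, φ(x)) is continuous; indeed, the partial sums F_N(x) = Σ_{k∈Λ_N} (f(T^k φ(x)) − f(T^k x)) converge to F uniformly on X. -/

import Mathlib

open MeasureTheory Filter Topology

/-- The full shift configuration space `𝒜^{ℤ^d}`. -/
abbrev Config (d : ℕ) (A : Type*) := (Fin d → ℤ) → A

/-- The shift action of `ℤ^d`: `(T^k x)_i = x_{i+k}`. -/
def shift {d : ℕ} {A : Type*} (k : Fin d → ℤ) (x : Config d A) : Config d A :=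
  fun i => x (i + k)

/-- The ℓ∞ norm of a lattice point, `‖k‖_∞ = max_i |k_i|`. -/
def normInf {d : ℕ} (k : Fin d → ℤ) : ℕ :=
  Finset.univ.sup fun i => (k i).natAbs

/-- The box `Λ_N = {k : ‖k‖_∞ ≤ N}` as a finset. -/
noncomputable def boxF (d N : ℕ) : Finset (Fin d → ℤ) :=
  Finset.Icc (fun _ => -(N : ℤ)) (fun _ => (N : ℤ))

/-- The `n`-th variation of `f` on a subshift `X`:
`δ_n(f) = sup {|f x - f y| : x, y ∈ X, x_{Λ_n} = y_{Λ_n}}`. -/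
noncomputable def deltaVar {d : ℕ} {A : Type*} (X : Set (Config d A))
    (f : Config d A → ℝ) (n : ℕ) : ℝ :=
  sSup {r : ℝ | ∃ x ∈ X, ∃ y ∈ X,
    (∀ k : Fin d → ℤ, normInf k ≤ n → x k = y k) ∧ r = |f x - f y|}

/-- `f` is bounded on `X`. -/
def BoundedOn {d : ℕ} {A : Type*} (X : Set (Config d A)) (f : Config d A → ℝ) : Prop :=
  ∃ C : ℝ, ∀ x ∈ X, |f x| ≤ C

/-- Membership in `SV_d(X)`: bounded with `Σ_{n ≥ 1} n^{d-1} δ_n(f) < ∞`. -/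
def MemSV (d : ℕ) {A : Type*} (X : Set (Config d A)) (f : Config d A → ℝ) : Prop :=
  BoundedOn X f ∧ Summable fun n : ℕ => ((n : ℝ) + 1) ^ (d - 1) * deltaVar X f (n + 1)

/-- The sup norm of `f` over `X`. -/
noncomputable def supNormOn {d : ℕ} {A : Type*} (X : Set (Config d A))
    (f : Config d A → ℝ) : ℝ :=
  sSup {r : ℝ | ∃ x ∈ X, r = |f x|}

/-- The `SV_d` norm: `‖f‖_{SV_d} = ‖f‖_∞ + Σ_{n ≥ 1} n^{d-1} δ_n(f)`. -/
noncomputable def svNorm (d : ℕ) {A : Type*} (X : Set (Config d A))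
    (f : Config d A → ℝ) : ℝ :=
  supNormOn X f + ∑' n : ℕ, ((n : ℝ) + 1) ^ (d - 1) * deltaVar X f (n + 1)

/-- The Gibbs relation `𝔗`: pairs of points of `X` that agree outside a finite set. -/
def gibbsRel {d : ℕ} {A : Type*} (X : Set (Config d A)) :
    Set (Config d A × Config d A) :=
  {p | p.1 ∈ X ∧ p.2 ∈ X ∧ ∃ Λ : Finset (Fin d → ℤ), ∀ k ∉ Λ, p.1 k = p.2 k}

/-- The cocycle `φ_f(x,y) = Σ_{k ∈ ℤ^d} (f(T^k y) - f(T^k x))` (unordered sum). -/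
noncomputable def phiF {d : ℕ} {A : Type*} (f : Config d A → ℝ)
    (x y : Config d A) : ℝ :=
  ∑' k : Fin d → ℤ, (f (shift k y) - f (shift k x))

/-- Membership in `𝓕(X)`: homeomorphisms of `X` changing only finitely many coordinates,
uniformly. -/
def memF {d : ℕ} {A : Type*} [TopologicalSpace A] (X : Set (Config d A))
    (φ : ↥X ≃ₜ ↥X) : Prop :=
  ∃ n : ℕ, 1 ≤ n ∧ ∀ x : ↥X, ∀ k : Fin d → ℤ, n < normInf k → (φ x).1 k = x.1 k

/-- `𝓕_n(X)`. -/
def Fn {d : ℕ} {A : Type*} [TopologicalSpace A] (X : Set (Config d A)) (n : ℕ) :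
    Set (↥X ≃ₜ ↥X) :=
  {φ | (∀ x : ↥X, ∀ k : Fin d → ℤ, n < normInf k → (φ x).1 k = x.1 k) ∧
    ∀ x y : ↥X,
      ((∀ k : Fin d → ℤ, normInf k ≤ n → x.1 k = y.1 k) ↔
        (∀ k : Fin d → ℤ, normInf k ≤ n → (φ x).1 k = (φ y).1 k))}

/-- The configuration `ω x_{Λ^c}`: equal to `ω` on `Λ` and to `x` off `Λ`. -/
def patch {d : ℕ} {A : Type*} (Λ : Finset (Fin d → ℤ)) (ω : {k // k ∈ Λ} → A)
    (x : Config d A) : Config d A :=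
  fun k => if h : k ∈ Λ then ω ⟨k, h⟩ else x k

/-- `f_n = Σ_{i ∈ Λ_n} f ∘ T^i`. -/
noncomputable def fnSum (d : ℕ) {A : Type*} (f : Config d A → ℝ) (n : ℕ)
    (z : Config d A) : ℝ :=
  ∑ i ∈ boxF d n, f (shift i z)

/-- The σ-algebra `𝓕_Δ` on `X`, generated by the coordinate projections `x ↦ x_i`, `i ∈ Δ`. -/
def cylSigma {d : ℕ} {A : Type*} [MeasurableSpace A] (X : Set (Config d A))
    (Δ : Set (Fin d → ℤ)) : MeasurableSpace ↥X :=
  MeasurableSpace.comap (fun (x : ↥X) (i : ↥Δ) => x.1 i.1) MeasurableSpace.pi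

/-- `μ` is a Gibbs measure for `f`: `(φ_f, 𝔗)`-conformal. -/
def IsGibbs (d : ℕ) {A : Type*} [MeasurableSpace A] (X : Set (Config d A))
    (f : Config d A → ℝ) (μ : Measure ↥X) : Prop :=
  ∀ V W : ↥X → ↥X, Measurable V → Measurable W →
    (∀ x, W (V x) = x) → (∀ x, V (W x) = x) →
    (∀ x : ↥X, ((x.1, (V x).1) ∈ gibbsRel X)) →
    (Measure.map V μ ≪ μ ∧
      ∀ᵐ x ∂μ, (Measure.map V μ).rnDeriv μ x
        = ENNReal.ofReal (Real.exp (phiF f x.1 (W x).1)))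

/-- `μ` is a topological Gibbs measure for `f`: `(φ_f|_{𝔗⁰}, 𝔗⁰)`-conformal. -/
def IsTopGibbs (d : ℕ) {A : Type*} [TopologicalSpace A] [MeasurableSpace A]
    (X : Set (Config d A)) (f : Config d A → ℝ) (μ : Measure ↥X) : Prop :=
  ∀ φ : ↥X ≃ₜ ↥X, memF X φ →
    (Measure.map (⇑φ) μ ≪ μ ∧
      ∀ᵐ x ∂μ, (Measure.map (⇑φ) μ).rnDeriv μ x
        = ENNReal.ofReal (Real.exp (phiF f x.1 (φ.symm x).1)))

/-- Finite-volume Gibbsian ratios defining the kernel `γ_Λ`. -/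
noncomputable def gammaFn (d : ℕ) {A : Type*} [Fintype A] (X : Set (Config d A))
    (f : Config d A → ℝ) (Λ : Finset (Fin d → ℤ)) (S : Set ↥X) (x : Config d A)
    (n : ℕ) : ℝ :=
  (∑ ω : {k // k ∈ Λ} → A,
      (Subtype.val '' S).indicator (fun z => Real.exp (fnSum d f n z)) (patch Λ ω x)) /
  (∑ η : {k // k ∈ Λ} → A,
      X.indicator (fun z => Real.exp (fnSum d f n z)) (patch Λ η x))

/-- The kernel `γ_Λ(S | x)`, defined as the limit of the finite-volume ratios. -/
noncomputable def gamma (d : ℕ) {A : Type*} [Fintype A] (X : Set (Config d A))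
    (f : Config d A → ℝ) (Λ : Finset (Fin d → ℤ)) (S : Set ↥X) (x : Config d A) : ℝ :=
  limUnder atTop (gammaFn d X f Λ S x)

/-- `X` is a subshift of finite type. -/
def IsSFT {d : ℕ} {A : Type*} (X : Set (Config d A)) : Prop :=
  ∃ n : ℕ, 1 ≤ n ∧ ∃ F : Set ({k : Fin d → ℤ // normInf k ≤ n} → A),
    X = {x : Config d A |
      ∀ l : Fin d → ℤ, (fun k : {k : Fin d → ℤ // normInf k ≤ n} => shift l x k.1) ∉ F}

/-- The topological Gibbs relation `𝔗⁰`. -/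
def topGibbsRel {d : ℕ} {A : Type*} [TopologicalSpace A] (X : Set (Config d A)) :
    Set (Config d A × Config d A) :=
  {p | ∃ (hx : p.1 ∈ X) (φ : ↥X ≃ₜ ↥X), memF X φ ∧ (φ ⟨p.1, hx⟩).1 = p.2}

/-- `f` is a local function on `X`. -/
def IsLocal {d : ℕ} {A : Type*} (X : Set (Config d A)) (f : Config d A → ℝ) : Prop :=
  ∃ Λ : Finset (Fin d → ℤ), ∀ x ∈ X, ∀ y ∈ X, (∀ k ∈ Λ, x k = y k) → f x = f y

section Aux

lemma mem_boxF {d N : ℕ} {k : Fin d → ℤ} : k ∈ boxF d N ↔ normInf k ≤ N := by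
  simp only [boxF, Finset.mem_Icc, Pi.le_def, normInf, Finset.sup_le_iff, Finset.mem_univ,
    forall_true_left]
  constructor
  · rintro ⟨h1, h2⟩ i
    have := h1 i; have := h2 i; omega
  · intro h
    constructor <;> intro i <;> have := h i <;> omega

lemma normInf_le_add {d : ℕ} (a b : Fin d → ℤ) : normInf (a + b) ≤ normInf a + normInf b := by
  refine Finset.sup_le fun i _ => ?_
  have h1 : (a i).natAbs ≤ normInf a :=
    Finset.le_sup (f := fun j => (a j).natAbs) (Finset.mem_univ i)
  have h2 : (b i).natAbs ≤ normInf b :=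
    Finset.le_sup (f := fun j => (b j).natAbs) (Finset.mem_univ i)
  have h3 : ((a + b) i).natAbs = (a i + b i).natAbs := rfl
  rw [h3]
  exact le_trans (Int.natAbs_add_le _ _) (add_le_add h1 h2)

lemma normInf_neg {d : ℕ} (a : Fin d → ℤ) : normInf (-a) = normInf a := by
  unfold normInf
  refine Finset.sup_congr rfl fun i _ => ?_
  show (-(a i)).natAbs = (a i).natAbs
  exact Int.natAbs_neg _

lemma deltaVar_props {d : ℕ} {A : Type*} {X : Set (Config d A)} (hne : X.Nonempty)
    {f : Config d A → ℝ} {C : ℝ} (hC : ∀ x ∈ X, |f x| ≤ C) (m : ℕ) :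
    0 ≤ deltaVar X f m ∧ deltaVar X f m ≤ 2 * C ∧
      ∀ x ∈ X, ∀ y ∈ X, (∀ k : Fin d → ℤ, normInf k ≤ m → x k = y k) →
        |f x - f y| ≤ deltaVar X f m := by
  obtain ⟨x0, hx0⟩ := hne
  set S : Set ℝ := {r : ℝ | ∃ x ∈ X, ∃ y ∈ X,
    (∀ k : Fin d → ℤ, normInf k ≤ m → x k = y k) ∧ r = |f x - f y|} with hS
  have hdS : deltaVar X f m = sSup S := rfl
  have hbdd : ∀ r ∈ S, r ≤ 2 * C := by
    rintro r ⟨x, hx, y, hy, -, rfl⟩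
    calc |f x - f y| = |f x + -(f y)| := by rw [sub_eq_add_neg]
      _ ≤ |f x| + |-(f y)| := abs_add_le _ _
      _ = |f x| + |f y| := by rw [abs_neg]
      _ ≤ C + C := add_le_add (hC x hx) (hC y hy)
      _ = 2 * C := by ring
  have hSne : S.Nonempty := ⟨|f x0 - f x0|, x0, hx0, x0, hx0, fun _ _ => rfl, rfl⟩
  have hBdd : BddAbove S := ⟨2 * C, hbdd⟩
  refine ⟨?_, hdS ▸ csSup_le hSne hbdd,
    fun x hx y hy hag => hdS ▸ le_csSup hBdd ⟨x, hx, y, hy, hag, rfl⟩⟩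
  have h0 : |f x0 - f x0| ≤ sSup S := le_csSup hBdd ⟨x0, hx0, x0, hx0, fun _ _ => rfl, rfl⟩
  rw [hdS]
  simpa using h0

lemma sphere_card_le {d : ℕ} (hd : 1 ≤ d) (m : ℕ) (t : Finset (Fin d → ℤ))
    (ht : ∀ k ∈ t, normInf k = m) : t.card ≤ 2 * d * (2 * m + 1) ^ (d - 1) := by
  classical
  haveI : Nonempty (Fin d) := ⟨⟨0, hd⟩⟩
  set slab : Fin d × Bool → Finset (Fin d → ℤ) := fun p =>
    Finset.Icc (Function.update (fun _ => -(m : ℤ)) p.1 (if p.2 then (m : ℤ) else -(m : ℤ)))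
               (Function.update (fun _ => (m : ℤ)) p.1 (if p.2 then (m : ℤ) else -(m : ℤ)))
    with hslab
  have hsub : t ⊆ Finset.univ.biUnion slab := by
    intro k hk
    have hnk := ht k hk
    obtain ⟨j, -, hj⟩ := Finset.exists_mem_eq_sup (Finset.univ : Finset (Fin d))
      Finset.univ_nonempty (fun i => (k i).natAbs)
    have hkj : (k j).natAbs = m := by
      have : normInf k = (k j).natAbs := hj
      omega
    have hall : ∀ i, (k i).natAbs ≤ m := by
      intro i
      have : (k i).natAbs ≤ normInf k :=
        Finset.le_sup (f := fun j => (k j).natAbs) (Finset.mem_univ i)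
      omega
    have hsgn : k j = (m : ℤ) ∨ k j = -(m : ℤ) := by omega
    rcases hsgn with hs | hs
    · refine Finset.mem_biUnion.mpr ⟨(j, true), Finset.mem_univ _, ?_⟩
      rw [hslab]
      simp only [Finset.mem_Icc, Pi.le_def]
      constructor <;> intro i <;> by_cases hij : i = j
      · subst hij; rw [Function.update_self]; simp [hs]
      · rw [Function.update_of_ne hij]; have := hall i; omega
      · subst hij; rw [Function.update_self]; simp [hs]
      · rw [Function.update_of_ne hij]; have := hall i; omega
    · refine Finset.mem_biUnion.mpr ⟨(j, false), Finset.mem_univ _, ?_⟩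
      rw [hslab]
      simp only [Finset.mem_Icc, Pi.le_def]
      constructor <;> intro i <;> by_cases hij : i = j
      · subst hij; rw [Function.update_self]; simp [hs]
      · rw [Function.update_of_ne hij]; have := hall i; omega
      · subst hij; rw [Function.update_self]; simp [hs]
      · rw [Function.update_of_ne hij]; have := hall i; omega
  have hcard : ∀ p : Fin d × Bool, (slab p).card ≤ (2 * m + 1) ^ (d - 1) := by
    intro p
    rw [hslab]
    rw [Pi.card_Icc]
    have hfac : ∀ i : Fin d, i ≠ p.1 →
        (Finset.Icc ((Function.update (fun _ => -(m : ℤ)) p.1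
          (if p.2 then (m : ℤ) else -(m : ℤ))) i)
          ((Function.update (fun _ => (m : ℤ)) p.1
          (if p.2 then (m : ℤ) else -(m : ℤ))) i)).card = 2 * m + 1 := by
      intro i hi
      rw [Function.update_of_ne hi, Function.update_of_ne hi, Int.card_Icc]
      omega
    rw [Fintype.prod_eq_mul_prod_compl p.1]
    have h1 : (Finset.Icc ((Function.update (fun _ => -(m : ℤ)) p.1
        (if p.2 then (m : ℤ) else -(m : ℤ))) p.1)
        ((Function.update (fun _ => (m : ℤ)) p.1
        (if p.2 then (m : ℤ) else -(m : ℤ))) p.1)).card = 1 := by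
      rw [Function.update_self, Function.update_self, Int.card_Icc]
      omega
    rw [h1, one_mul]
    have h2 : ∀ i ∈ ({p.1}ᶜ : Finset (Fin d)), (Finset.Icc
        ((Function.update (fun _ => -(m : ℤ)) p.1 (if p.2 then (m : ℤ) else -(m : ℤ))) i)
        ((Function.update (fun _ => (m : ℤ)) p.1
        (if p.2 then (m : ℤ) else -(m : ℤ))) i)).card = 2 * m + 1 := by
      intro i hi
      exact hfac i (by simpa using hi)
    rw [Finset.prod_congr rfl h2, Finset.prod_const]
    have h3 : ({p.1}ᶜ : Finset (Fin d)).card = d - 1 := by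
      rw [Finset.card_compl, Finset.card_singleton, Fintype.card_fin]
    rw [h3]
  calc t.card ≤ (Finset.univ.biUnion slab).card := Finset.card_le_card hsub
    _ ≤ ∑ p : Fin d × Bool, (slab p).card := Finset.card_biUnion_le
    _ ≤ ∑ _p : Fin d × Bool, (2 * m + 1) ^ (d - 1) :=
        Finset.sum_le_sum fun p _ => hcard p
    _ = 2 * d * (2 * m + 1) ^ (d - 1) := by
        rw [Finset.sum_const, Finset.card_univ, Fintype.card_prod, Fintype.card_fin,
          Fintype.card_bool, smul_eq_mul]
        ring

end Aux

/-- For `f ∈ SV_d(X)` and `φ ∈ 𝓕(X)`, the partial sums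
`F_N(x) = Σ_{k ∈ Λ_N} (f(T^k φ(x)) − f(T^k x))` converge uniformly to
`F(x) = φ_f(x, φ(x))`; in particular `F` is continuous. -/
theorem phiF_continuous {d : ℕ} (hd : 1 ≤ d) {A : Type*} [Fintype A] [Nonempty A]
    [TopologicalSpace A] [DiscreteTopology A]
    (X : Set (Config d A)) (hne : X.Nonempty) (hcl : IsClosed X)
    (hinv : ∀ k : Fin d → ℤ, ∀ x ∈ X, shift k x ∈ X)
    (f : Config d A → ℝ) (hf : MemSV d X f)
    (φ : ↥X ≃ₜ ↥X) (hφ : memF X φ) :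
    TendstoUniformly
      (fun (N : ℕ) (x : ↥X) => ∑ k ∈ boxF d N, (f (shift k (φ x).1) - f (shift k x.1)))
      (fun x : ↥X => phiF f x.1 (φ x).1) atTop ∧
    Continuous (fun x : ↥X => phiF f x.1 (φ x).1) := by
  classical
  obtain ⟨C, hC⟩ := hf.1
  obtain ⟨n, hn1, hφn⟩ := hφ
  obtain ⟨x0, hx0⟩ := hne
  have hC0 : 0 ≤ C := le_trans (abs_nonneg _) (hC x0 hx0)
  have hδ := fun m => deltaVar_props ⟨x0, hx0⟩ hC m
  set h : ℕ → ℝ := fun j => ((j : ℝ) + 1) ^ (d - 1) * deltaVar X f (j + 1) with hh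
  have hsumh : Summable h := hf.2
  have hh0 : ∀ j, 0 ≤ h j := fun j => mul_nonneg (by positivity) (hδ _).1
  set u : (Fin d → ℤ) → ℝ := fun k =>
    if normInf k ≤ n + 1 then 2 * C else deltaVar X f (normInf k - (n + 1)) with hu
  have hu0 : ∀ k, 0 ≤ u k := by
    intro k
    rw [hu]
    dsimp only
    split
    · linarith
    · exact (hδ _).1
  -- pointwise bound
  have hbound : ∀ (k : Fin d → ℤ) (x : ↥X),
      ‖f (shift k (φ x).1) - f (shift k x.1)‖ ≤ u k := by
    intro k x
    rw [Real.norm_eq_abs, hu]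
    dsimp only
    by_cases hk : normInf k ≤ n + 1
    · rw [if_pos hk]
      have h1 := hC _ (hinv k _ (φ x).2)
      have h2 := hC _ (hinv k _ x.2)
      calc |f (shift k (φ x).1) - f (shift k x.1)|
          ≤ |f (shift k (φ x).1)| + |f (shift k x.1)| := abs_sub _ _
        _ ≤ C + C := add_le_add h1 h2
        _ = 2 * C := by ring
    · rw [if_neg hk]
      refine (hδ (normInf k - (n + 1))).2.2 _ (hinv k _ (φ x).2) _ (hinv k _ x.2) ?_
      intro i hi
      show (φ x).1 (i + k) = x.1 (i + k)
      apply hφn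
      have t1 : normInf k ≤ normInf (i + k) + normInf i := by
        have t2 := normInf_le_add (i + k) (-i)
        have e : (i + k) + (-i) = k := by abel
        rw [e, normInf_neg] at t2
        exact t2
      omega
  -- summability of the dominating function
  have hsumu : Summable u := by
    refine summable_of_sum_le (c := ((boxF d (n + 1)).card : ℝ) * (2 * C) +
      (2 * (d : ℝ) * (2 * (n : ℝ) + 5) ^ (d - 1)) * ∑' j, h j) hu0 ?_
    intro s
    rw [← Finset.sum_filter_add_sum_filter_not s (fun k => normInf k ≤ n + 1)]
    have part1 : ∑ k ∈ s.filter (fun k => normInf k ≤ n + 1), u k ≤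
        ((boxF d (n + 1)).card : ℝ) * (2 * C) := by
      have e1 : ∑ k ∈ s.filter (fun k => normInf k ≤ n + 1), u k =
          ∑ _k ∈ s.filter (fun k => normInf k ≤ n + 1), 2 * C := by
        refine Finset.sum_congr rfl fun k hk => ?_
        rw [hu]
        exact if_pos (Finset.mem_filter.mp hk).2
      rw [e1, Finset.sum_const, nsmul_eq_mul]
      have hsub : s.filter (fun k => normInf k ≤ n + 1) ⊆ boxF d (n + 1) := by
        intro k hk
        exact mem_boxF.mpr (Finset.mem_filter.mp hk).2
      have := Finset.card_le_card hsub
      have hcast : ((s.filter (fun k => normInf k ≤ n + 1)).card : ℝ) ≤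
          ((boxF d (n + 1)).card : ℝ) := by exact_mod_cast this
      exact mul_le_mul_of_nonneg_right hcast (by linarith)
    have part2 : ∑ k ∈ s.filter (fun k => ¬ normInf k ≤ n + 1), u k ≤
        (2 * (d : ℝ) * (2 * (n : ℝ) + 5) ^ (d - 1)) * ∑' j, h j := by
      set s2 := s.filter (fun k => ¬ normInf k ≤ n + 1) with hs2
      have e2 : ∑ k ∈ s2, u k = ∑ k ∈ s2, deltaVar X f (normInf k - (n + 1)) := by
        refine Finset.sum_congr rfl fun k hk => ?_
        rw [hu]
        exact if_neg (Finset.mem_filter.mp hk).2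
      rw [e2]
      have e3 : ∑ k ∈ s2, deltaVar X f (normInf k - (n + 1)) =
          ∑ m ∈ s2.image normInf, (s2.filter (fun k => normInf k = m)).card •
            deltaVar X f (m - (n + 1)) :=
        Finset.sum_comp (fun m => deltaVar X f (m - (n + 1))) normInf
      rw [e3]
      have hK : ∀ m ∈ s2.image normInf,
          (s2.filter (fun k => normInf k = m)).card •
            deltaVar X f (m - (n + 1)) ≤
          (2 * (d : ℝ) * (2 * (n : ℝ) + 5) ^ (d - 1)) * h (m - (n + 2)) := by
        intro m hm
        obtain ⟨k0, hk0, hk0m⟩ := Finset.mem_image.mp hm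
        have hm2 : n + 2 ≤ m := by
          have := (Finset.mem_filter.mp hk0).2
          omega
        have hcard : (s2.filter (fun k => normInf k = m)).card ≤
            2 * d * (2 * m + 1) ^ (d - 1) :=
          sphere_card_le hd m _ (fun k hk => (Finset.mem_filter.mp hk).2)
        have hcard2 : (2 : ℕ) * d * (2 * m + 1) ^ (d - 1) ≤
            2 * d * ((2 * n + 5) * (m - (n + 1))) ^ (d - 1) := by
          have : 2 * m + 1 ≤ (2 * n + 5) * (m - (n + 1)) := by
            have h5 : m - (n + 1) = (m - (n + 2)) + 1 := by omega
            have h7 : (2 * n + 5) * ((m - (n + 2)) + 1) =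
                (2 * n + 5) * (m - (n + 2)) + 2 * n + 5 := by ring
            have h8 : 2 * (m - (n + 2)) ≤ (2 * n + 5) * (m - (n + 2)) :=
              Nat.mul_le_mul_right _ (by omega)
            rw [h5]
            omega
          exact Nat.mul_le_mul_left _ (Nat.pow_le_pow_left this _)
        have hδ0 := (hδ (m - (n + 1))).1
        have hstep : ((s2.filter (fun k => normInf k = m)).card : ℝ) ≤
            2 * (d : ℝ) * ((2 * (n : ℝ) + 5) * ((m : ℝ) - (n : ℝ) - 1)) ^ (d - 1) := by
          have := le_trans hcard hcard2
          have hcast : ((2 * d * ((2 * n + 5) * (m - (n + 1))) ^ (d - 1) : ℕ) : ℝ) =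
              2 * (d : ℝ) * ((2 * (n : ℝ) + 5) * ((m : ℝ) - (n : ℝ) - 1)) ^ (d - 1) := by
            push_cast [Nat.cast_sub (by omega : n + 1 ≤ m)]
            ring_nf
          rw [← hcast]
          exact_mod_cast this
        rw [nsmul_eq_mul]
        have hmn1 : ((m - (n + 1) : ℕ) : ℝ) = (m : ℝ) - (n : ℝ) - 1 := by
          push_cast [Nat.cast_sub (by omega : n + 1 ≤ m)]
          ring
        have hmn2 : ((m - (n + 2) : ℕ) : ℝ) + 1 = (m : ℝ) - (n : ℝ) - 1 := by
          push_cast [Nat.cast_sub (by omega : n + 2 ≤ m)]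
          ring
        have hhm : h (m - (n + 2)) = ((m : ℝ) - (n : ℝ) - 1) ^ (d - 1) *
            deltaVar X f (m - (n + 1)) := by
          rw [hh]
          dsimp only
          rw [hmn2]
          congr 2
          omega
        rw [hhm]
        calc ((s2.filter (fun k => normInf k = m)).card : ℝ) * deltaVar X f (m - (n + 1))
            ≤ (2 * (d : ℝ) * ((2 * (n : ℝ) + 5) * ((m : ℝ) - (n : ℝ) - 1)) ^ (d - 1)) *
              deltaVar X f (m - (n + 1)) := mul_le_mul_of_nonneg_right hstep hδ0
          _ = (2 * (d : ℝ) * (2 * (n : ℝ) + 5) ^ (d - 1)) *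
              (((m : ℝ) - (n : ℝ) - 1) ^ (d - 1) * deltaVar X f (m - (n + 1))) := by
              rw [mul_pow]; ring
      calc ∑ m ∈ s2.image normInf, (s2.filter (fun k => normInf k = m)).card •
            deltaVar X f (m - (n + 1))
          ≤ ∑ m ∈ s2.image normInf,
            (2 * (d : ℝ) * (2 * (n : ℝ) + 5) ^ (d - 1)) * h (m - (n + 2)) :=
            Finset.sum_le_sum hK
        _ = (2 * (d : ℝ) * (2 * (n : ℝ) + 5) ^ (d - 1)) *
            ∑ m ∈ s2.image normInf, h (m - (n + 2)) := by rw [Finset.mul_sum]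
        _ ≤ (2 * (d : ℝ) * (2 * (n : ℝ) + 5) ^ (d - 1)) * ∑' j, h j := by
            refine mul_le_mul_of_nonneg_left ?_ (by positivity)
            have hinj : ∀ a ∈ s2.image normInf, ∀ b ∈ s2.image normInf,
                a - (n + 2) = b - (n + 2) → a = b := by
              intro a ha b hb hab
              obtain ⟨ka, hka, hka2⟩ := Finset.mem_image.mp ha
              obtain ⟨kb, hkb, hkb2⟩ := Finset.mem_image.mp hb
              have h1 := (Finset.mem_filter.mp hka).2
              have h2 := (Finset.mem_filter.mp hkb).2
              omega
            rw [← Finset.sum_image hinj]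
            exact Summable.sum_le_tsum _ (fun j _ => hh0 j) hsumh
    linarith
  -- uniform convergence over finsets
  have htu : TendstoUniformly (fun (t : Finset (Fin d → ℤ)) (x : ↥X) =>
      ∑ k ∈ t, (f (shift k (φ x).1) - f (shift k x.1)))
      (fun x : ↥X => phiF f x.1 (φ x).1) atTop :=
    tendstoUniformly_tsum hsumu hbound
  have hbox : Tendsto (boxF d) atTop atTop := by
    refine tendsto_atTop_finset_of_monotone ?_ ?_
    · intro M N hMN
      refine Finset.Icc_subset_Icc ?_ ?_ <;> intro i <;> simp <;> omega
    · intro k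
      exact ⟨normInf k, mem_boxF.mpr le_rfl⟩
  have huniform : TendstoUniformly
      (fun (N : ℕ) (x : ↥X) => ∑ k ∈ boxF d N, (f (shift k (φ x).1) - f (shift k x.1)))
      (fun x : ↥X => phiF f x.1 (φ x).1) atTop :=
    fun v hv => hbox.eventually (htu v hv)
  -- continuity of f restricted to X
  have hδtend : Tendsto (fun j => deltaVar X f (j + 1)) atTop (𝓝 0) := by
    refine squeeze_zero (fun j => (hδ _).1) (fun j => ?_) hsumh.tendsto_atTop_zero
    have h1 : (1 : ℝ) ≤ ((j : ℝ) + 1) ^ (d - 1) :=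
      one_le_pow₀ (le_add_of_nonneg_left (Nat.cast_nonneg j) : (1 : ℝ) ≤ (j : ℝ) + 1)
    calc deltaVar X f (j + 1) = 1 * deltaVar X f (j + 1) := (one_mul _).symm
      _ ≤ ((j : ℝ) + 1) ^ (d - 1) * deltaVar X f (j + 1) :=
          mul_le_mul_of_nonneg_right h1 (hδ _).1
  have hfc : Continuous (fun y : ↥X => f y.1) := by
    rw [continuous_iff_continuousAt]
    intro y
    rw [ContinuousAt, Metric.tendsto_nhds]
    intro ε hε
    obtain ⟨m, hm⟩ : ∃ m, deltaVar X f (m + 1) < ε :=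
      (hδtend.eventually_lt_const hε).exists
    have hSopen : IsOpen (⋂ i ∈ boxF d (m + 1), {z : ↥X | z.1 i = y.1 i}) := by
      refine isOpen_biInter_finset fun i _ => ?_
      have : IsOpen ((fun z : ↥X => z.1 i) ⁻¹' {y.1 i}) :=
        (isOpen_discrete _).preimage ((continuous_apply i).comp continuous_subtype_val)
      exact this
    refine Filter.eventually_of_mem (hSopen.mem_nhds ?_) ?_
    · exact Set.mem_iInter₂.mpr fun i _ => rfl
    · intro z hz
      rw [Real.dist_eq]
      have hag : ∀ k : Fin d → ℤ, normInf k ≤ m + 1 → z.1 k = y.1 k := fun k hk =>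
        Set.mem_iInter₂.mp hz k (mem_boxF.mpr hk)
      exact lt_of_le_of_lt ((hδ (m + 1)).2.2 _ z.2 _ y.2 hag) hm
  have hcont : ∀ N : ℕ, Continuous (fun x : ↥X =>
      ∑ k ∈ boxF d N, (f (shift k (φ x).1) - f (shift k x.1))) := by
    intro N
    refine continuous_finset_sum _ fun k _ => ?_
    have hs : Continuous (fun y : Config d A => shift k y) :=
      continuous_pi fun i => continuous_apply (i + k)
    have c1 : Continuous (fun x : ↥X => (⟨shift k x.1, hinv k x.1 x.2⟩ : ↥X)) :=
      Continuous.subtype_mk (hs.comp continuous_subtype_val) _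
    have c2 : Continuous (fun x : ↥X =>
        (⟨shift k (φ x).1, hinv k (φ x).1 (φ x).2⟩ : ↥X)) := c1.comp φ.continuous
    exact (hfc.comp c2).sub (hfc.comp c1)
  exact ⟨huniform, huniform.continuous (Filter.Eventually.of_forall hcont).frequently⟩
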